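/- If rational numbers (or -∞ values) x₁, …, x_n ∈ ℚ ∪ {-∞} satisfy a max-average constraint system (constraints of the form x_{i₀} ≤ max(x_{i₁},…,x_{i_k}), x_{i₀} ≤ (x_{i₁}+x_{i₂})/2, and x_{i₀} = c for rational constants c), then the Puiseux series (t^{x₁}, …, t^{x_n}) (with t^{-∞} := 0) satisfy the lifted system: t^{x_{i₀}} ≤ t^{x_{i₁}} + ⋯ + t^{x_{i_k}} for each max-constraint, (t^{x_{i₀}})² ≤ t^{x_{i₁}}·t^{x_{i₂}} for each average-constraint, t^{x_{i₀}} = t^c for each constant-constraint, and each t^{x_i} ≥ 0. -/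

import Mathlib

noncomputable section

/-- The field of (generalized) real Puiseux series, modeled as Hahn series over `ℚᵒᵈ`
(so that the leading term has the *largest* exponent, matching the "t large" convention). -/
abbrev K : Type := HahnSeries ℚᵒᵈ ℝ

/-- The leading coefficient of a Puiseux series (0 for the zero series). -/
noncomputable def leadCoeff (x : K) : ℝ := x.coeff x.order

/-- `x ≥ 0` in the ordered field of Puiseux series: leading coefficient is `≥ 0`. -/
def Knonneg (x : K) : Prop := 0 ≤ leadCoeff x

/-- The order relation on Puiseux series. -/
def Kle (x y : K) : Prop := Knonneg (y - x)

/-- The valuation (leading exponent) of a Puiseux series, `⊥ = -∞` for the zero series. -/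
noncomputable def val (x : K) : WithBot ℚ :=
  open scoped Classical in
  if x = 0 then ⊥ else (OrderDual.ofDual x.order : ℚ)

/-- The monomial `t^r`. -/
noncomputable def tmon (r : ℚ) : K := HahnSeries.single (OrderDual.toDual r) (1 : ℝ)

/-- `t^v` for `v ∈ ℚ ∪ {-∞}`, with `t^{-∞} = 0`. -/
noncomputable def tmonBot (v : WithBot ℚ) : K := WithBot.recBotCoe 0 tmon v

/-- A max-average constraint on variables indexed by `Fin n`. -/
inductive MACon (n : ℕ) where
  /-- `x i₀ ≤ max (x (idx 0), …, x (idx (k-1)))` -/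
  | maxC (i₀ : Fin n) (k : ℕ) (idx : Fin k → Fin n) : MACon n
  /-- `x i₀ ≤ (x i₁ + x i₂)/2` -/
  | avgC (i₀ i₁ i₂ : Fin n) : MACon n
  /-- `x i₀ = c` for a rational constant `c` -/
  | constC (i₀ : Fin n) (c : ℚ) : MACon n

/-- Satisfaction of a max-average constraint over `ℚ ∪ {-∞}`. -/
def SatQ {n : ℕ} (x : Fin n → WithBot ℚ) : MACon n → Prop
  | .maxC i₀ _ idx => x i₀ ≤ Finset.univ.sup (fun j => x (idx j))
  | .avgC i₀ i₁ i₂ => x i₀ ≤ (x i₁ + x i₂).map (fun q => q / 2)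
  | .constC i₀ c => x i₀ = (c : WithBot ℚ)

/-- Satisfaction of the lifted constraint over the Puiseux series field. -/
def SatK {n : ℕ} (y : Fin n → K) : MACon n → Prop
  | .maxC i₀ _ idx => Kle (y i₀) (∑ j, y (idx j))
  | .avgC i₀ i₁ i₂ => Kle ((y i₀) ^ 2) (y i₁ * y i₂)
  | .constC i₀ c => y i₀ = tmon c

open HahnSeries in
lemma leadCoeff_eq_leadingCoeff (x : K) : leadCoeff x = x.leadingCoeff :=
  HahnSeries.leadingCoeff_eq.symm

lemma Knonneg_zero : Knonneg (0 : K) := by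
  simp [Knonneg, leadCoeff_eq_leadingCoeff, HahnSeries.leadingCoeff_zero]

lemma Knonneg.add {x y : K} (hx : Knonneg x) (hy : Knonneg y) : Knonneg (x + y) := by
  rcases eq_or_ne x 0 with rfl | hx0
  · simpa using hy
  rcases eq_or_ne y 0 with rfl | hy0
  · simpa using hx
  rw [Knonneg, leadCoeff_eq_leadingCoeff] at hx hy ⊢
  have hlx : 0 < x.leadingCoeff := hx.lt_of_ne (Ne.symm (HahnSeries.leadingCoeff_ne_zero.mpr hx0))
  have hly : 0 < y.leadingCoeff := hy.lt_of_ne (Ne.symm (HahnSeries.leadingCoeff_ne_zero.mpr hy0))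
  rcases lt_trichotomy x.orderTop y.orderTop with h | h | h
  · rw [HahnSeries.leadingCoeff_add_eq_left h]; exact hx
  · -- equal orders
    obtain ⟨g, hg'⟩ := WithTop.ne_top_iff_exists.mp (HahnSeries.orderTop_ne_top.mpr hx0)
    have hg : x.orderTop = (g : WithTop ℚᵒᵈ) := hg'.symm
    have hxg : x.coeff g = x.leadingCoeff := by
      rw [HahnSeries.leadingCoeff_of_ne_zero hx0]
      congr 1
      have := (HahnSeries.orderTop_of_ne_zero hx0).symm.trans hg
      rw [eq_comm, WithTop.untop_eq_iff]; exact hg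
    have hyg : y.coeff g = y.leadingCoeff := by
      rw [HahnSeries.leadingCoeff_of_ne_zero hy0]
      congr 1
      have := (HahnSeries.orderTop_of_ne_zero hy0).symm.trans (h.symm.trans hg)
      rw [eq_comm, WithTop.untop_eq_iff]; exact h.symm.trans hg
    have hcoeff : (x + y).coeff g = x.leadingCoeff + y.leadingCoeff := by
      rw [HahnSeries.coeff_add, hxg, hyg]
    have hpos : (0 : ℝ) < (x + y).coeff g := by rw [hcoeff]; positivity
    have hle : (x + y).orderTop ≤ g := HahnSeries.orderTop_le_of_coeff_ne_zero hpos.ne'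
    have hge : (g : WithTop ℚᵒᵈ) ≤ (x + y).orderTop := by
      have := HahnSeries.min_orderTop_le_orderTop_add (x := x) (y := y)
      rwa [hg, h.symm.trans hg, min_self] at this
    have hxy0 : x + y ≠ 0 := HahnSeries.ne_zero_of_coeff_ne_zero hpos.ne'
    have : (x + y).leadingCoeff = (x + y).coeff g := by
      rw [HahnSeries.leadingCoeff_of_ne_zero hxy0]
      congr 1
      have := (HahnSeries.orderTop_of_ne_zero hxy0).symm.trans (le_antisymm hle hge)
      rw [WithTop.untop_eq_iff]; exact le_antisymm hle hge
    rw [this]; exact hpos.le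
  · rw [HahnSeries.leadingCoeff_add_eq_right h]; exact hy

lemma Knonneg_sum {ι : Type*} (s : Finset ι) (f : ι → K) (h : ∀ i ∈ s, Knonneg (f i)) :
    Knonneg (∑ i ∈ s, f i) :=
  Finset.sum_induction f Knonneg (fun _ _ ha hb => ha.add hb) Knonneg_zero h

lemma Knonneg_tmon (r : ℚ) : Knonneg (tmon r) := by
  rw [Knonneg, leadCoeff_eq_leadingCoeff, tmon, HahnSeries.leadingCoeff_of_single]
  norm_num

lemma Knonneg_tmonBot (v : WithBot ℚ) : Knonneg (tmonBot v) := by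
  cases v with
  | bot => exact Knonneg_zero
  | coe q => exact Knonneg_tmon q

lemma tmon_ne_zero (r : ℚ) : tmon r ≠ 0 :=
  HahnSeries.single_ne_zero one_ne_zero

lemma Knonneg_tmon_sub {p q : ℚ} (h : q ≤ p) : Knonneg (tmon p - tmon q) := by
  rcases eq_or_lt_of_le h with rfl | hlt
  · simpa using Knonneg_zero
  · rw [Knonneg, leadCoeff_eq_leadingCoeff, HahnSeries.leadingCoeff_sub, tmon,
      HahnSeries.leadingCoeff_of_single]
    · norm_num
    · rw [tmon, tmon, HahnSeries.orderTop_single one_ne_zero,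
        HahnSeries.orderTop_single one_ne_zero]
      exact_mod_cast (show OrderDual.toDual p < OrderDual.toDual q from hlt)

lemma Kle_tmonBot {w v : WithBot ℚ} (h : w ≤ v) : Kle (tmonBot w) (tmonBot v) := by
  cases w with
  | bot =>
      rw [Kle]
      simpa [tmonBot] using Knonneg_tmonBot v
  | coe q =>
      cases v with
      | bot => exact absurd h (by simp)
      | coe p => exact Knonneg_tmon_sub (by exact_mod_cast h)

lemma tmon_mul (p q : ℚ) : tmon p * tmon q = tmon (p + q) := by
  rw [tmon, tmon, tmon, HahnSeries.single_mul_single, one_mul]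
  rfl

/-- a solution `x ∈ (ℚ ∪ {-∞})ⁿ` of a max-average constraint system lifts to
the solution `(t^{x₁}, …, t^{x_n})` (with `t^{-∞} = 0`) of the lifted Puiseux system,
and all the lifted values are nonnegative. -/
theorem lift_solution {n : ℕ} (cs : List (MACon n)) (x : Fin n → WithBot ℚ)
    (hsat : ∀ c ∈ cs, SatQ x c) :
    (∀ c ∈ cs, SatK (fun i => tmonBot (x i)) c) ∧ (∀ i, Knonneg (tmonBot (x i))) := by
  refine ⟨fun c hc => ?_, fun i => Knonneg_tmonBot _⟩
  have h := hsat c hc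
  cases c with
  | maxC i₀ k idx =>
      simp only [SatK, SatQ] at h ⊢
      rw [Kle]
      cases hx0 : x i₀ with
      | bot =>
          simp only [hx0, tmonBot, WithBot.recBotCoe_bot, sub_zero]
          exact Knonneg_sum _ _ (fun j _ => Knonneg_tmonBot _)
      | coe q =>
          rw [hx0] at h
          obtain ⟨j₀, -, hj₀⟩ := (Finset.le_sup_iff (WithBot.bot_lt_coe q)).mp h
          have hdec : (∑ j, tmonBot (x (idx j))) - tmonBot ((q : WithBot ℚ))
              = (tmonBot (x (idx j₀)) - tmonBot ((q : WithBot ℚ)))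
                + ∑ j ∈ Finset.univ.erase j₀, tmonBot (x (idx j)) := by
            rw [← Finset.add_sum_erase _ _ (Finset.mem_univ j₀)]
            ring
          rw [hdec]
          exact (Kle_tmonBot hj₀).add (Knonneg_sum _ _ fun j _ => Knonneg_tmonBot _)
  | avgC i₀ i₁ i₂ =>
      simp only [SatK, SatQ] at h ⊢
      rw [Kle]
      cases hb : x i₁ with
      | bot =>
          rw [hb] at h
          simp only [WithBot.bot_add, WithBot.map_bot, le_bot_iff] at h
          simp [h, hb, tmonBot, Knonneg_zero]
      | coe p₁ =>
          cases hc2 : x i₂ with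
          | bot =>
              rw [hc2] at h
              simp only [WithBot.add_bot, WithBot.map_bot, le_bot_iff] at h
              simp [h, hc2, tmonBot, Knonneg_zero]
          | coe p₂ =>
              rw [hb, hc2, ← WithBot.coe_add, WithBot.map_coe] at h
              simp only [hb, hc2, tmonBot, WithBot.recBotCoe_coe]
              rw [tmon_mul]
              cases hx0 : x i₀ with
              | bot =>
                  simp only [hx0, tmonBot, WithBot.recBotCoe_bot]
                  rw [zero_pow (by norm_num), sub_zero]
                  exact Knonneg_tmon _
              | coe q =>
                  rw [hx0] at h
                  have hq : q ≤ (p₁ + p₂) / 2 := by exact_mod_cast h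
                  simp only [tmonBot, WithBot.recBotCoe_coe]
                  rw [pow_two, tmon_mul]
                  exact Knonneg_tmon_sub (by linarith)
  | constC i₀ c =>
      simp only [SatK, SatQ] at h ⊢
      rw [h]
      rfl
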